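/- Let k be a field of characteristic p > 0, let n ≥ 1, and let A = k[x_1,...,x_n]/(x_1^{d_1},...,x_n^{d_n}) with all d_i ≥ 2. If Σ_{i=1}^n (d_i − 1) < p, then A has the strong Lefschetz property, with x_1 + ... + x_n as a strong Lefschetz element. -/

import Mathlib

open MvPolynomial

/-- The monomial complete intersection ideal `(x_1^{d_1}, ..., x_n^{d_n})`. -/
noncomputable def pideal (k : Type) [Field k] {n : ℕ} (d : Fin n → ℕ) :
    Ideal (MvPolynomial (Fin n) k) :=
  Ideal.span (Set.range fun i => (X i : MvPolynomial (Fin n) k) ^ d i)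

/-- The degree-`i` graded component of the quotient `k[x_1,...,x_n]/I`,
viewed as the image of the homogeneous degree-`i` polynomials. -/
noncomputable def qcomp (k : Type) [Field k] {n : ℕ}
    (I : Ideal (MvPolynomial (Fin n) k)) (i : ℕ) :
    Submodule k (MvPolynomial (Fin n) k ⧸ I) :=
  Submodule.map (Ideal.Quotient.mkₐ k I).toLinearMap
    (homogeneousSubmodule (Fin n) k i)

/-- The degree-`i` graded component of `k[x_1,...,x_n]/(x_1^{d_1},...,x_n^{d_n})`. -/
noncomputable def comp (k : Type) [Field k] {n : ℕ} (d : Fin n → ℕ) (i : ℕ) :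
    Submodule k (MvPolynomial (Fin n) k ⧸ pideal k d) :=
  qcomp k (pideal k d) i

/-- Multiplication by `s`, as a map from the subspace `V` to the subspace `W`,
has maximal rank: it is injective or surjective. -/
def maxRankOn {k Q : Type} [Field k] [CommRing Q] [Module k Q]
    (s : Q) (V W : Submodule k Q) : Prop :=
  (∀ f ∈ V, s * f = 0 → f = 0) ∨ (∀ g ∈ W, ∃ f ∈ V, s * f = g)

namespace SL2Abs

variable {k V : Type} [Field k] [AddCommGroup V] [Module k V]
variable {p N : ℕ} (E F : Module.End k V) (W : ℕ → Submodule k V)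

/-- weight of degree i -/
noncomputable def lam (N : ℕ) (k : Type) [Field k] (i : ℕ) : k :=
  ((2 * i : ℕ) : k) - (N : k)

lemma lam_succ (N : ℕ) (k : Type) [Field k] (i : ℕ) :
    lam N k (i + 1) = lam N k i + 2 := by
  simp [lam]; push_cast; ring


lemma pow_apply_succ (E : Module.End k V) (m : ℕ) (v : V) :
    (E ^ (m + 1)) v = (E ^ m) (E v) := by
  rw [pow_succ, Module.End.mul_apply]

lemma pow_apply_succ' (E : Module.End k V) (m : ℕ) (v : V) :
    (E ^ (m + 1)) v = E ((E ^ m) v) := by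
  rw [pow_succ', Module.End.mul_apply]

section

variable
  (hE : ∀ i, ∀ w ∈ W i, E w ∈ W (i + 1))
  (hC : ∀ i, ∀ w ∈ W i, E (F w) - F (E w) = lam N k i • w)

include hE hC in
lemma comm_pow : ∀ m (i : ℕ) (v : V), v ∈ W i →
    F ((E ^ (m + 1)) v) =
      (E ^ (m + 1)) (F v) - (((m + 1 : ℕ) : k) * (lam N k i + (m : ℕ))) • (E ^ m) v := by
  intro m
  induction m with
  | zero =>
    intro i v hv
    have h := hC i v hv
    simp only [pow_one, pow_zero, Module.End.one_apply, Nat.cast_one, Nat.cast_zero, add_zero,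
      one_mul, zero_add]
    rw [eq_sub_iff_add_eq, ← h]
    abel
  | succ m ih =>
    intro i v hv
    have h1 : (E ^ (m + 1 + 1)) v = (E ^ (m + 1)) (E v) :=
      pow_apply_succ E (m+1) v
    have h2 := ih (i + 1) (E v) (hE i v hv)
    have h3 := hC i v hv
    have hFE : F (E v) = E (F v) - lam N k i • v := by
      rw [eq_sub_iff_add_eq, ← h3]; abel
    rw [h1, h2, hFE]
    have h4 : (E ^ (m + 1)) (E (F v)) = (E ^ (m + 1 + 1)) (F v) :=
      (pow_apply_succ E (m+1) (F v)).symm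
    have h5 : (E ^ m) (E v) = (E ^ (m + 1)) v :=
      (pow_apply_succ E m v).symm
    rw [map_sub, map_smul, h4, h5, lam_succ]
    rw [sub_sub, ← add_smul]
    congr 2
    push_cast
    ring

/-- scalar for the lowest weight string -/
noncomputable def cstr (N : ℕ) (k : Type) [Field k] (i m : ℕ) : k :=
  ∏ s ∈ Finset.range m, (-(((s + 1 : ℕ) : k) * (lam N k i + (s : ℕ))))

include hE hC in
lemma lowstring {i : ℕ} {v : V} (hv : v ∈ W i) (hFv : F v = 0) :
    ∀ m, (F ^ m) ((E ^ m) v) = cstr N k i m • v := by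
  intro m
  induction m with
  | zero => simp [cstr]
  | succ m ih =>
    have h1 : (E ^ (m + 1)) v = (E ^ (m+1)) v := rfl
    have h2 := comm_pow E F W hE hC m i v hv
    rw [hFv, map_zero, zero_sub] at h2
    have h3 : (F ^ (m + 1)) ((E ^ (m + 1)) v) = (F ^ m) (F ((E ^ (m+1)) v)) :=
      pow_apply_succ F m ((E ^ (m+1)) v)
    rw [h3, h2, map_neg, map_smul, ih]
    rw [show cstr N k i (m+1) = cstr N k i m * (-(((m + 1 : ℕ) : k) * (lam N k i + (m : ℕ)))) from
      Finset.prod_range_succ _ m]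
    rw [smul_smul, ← neg_smul]
    congr 1
    ring

end

section Main

variable [hp : Fact p.Prime] [CharP k p] (hNp : N < p)
variable (hfd : ∀ i, FiniteDimensional k (W i))
  (htop : ∀ i, N < i → W i = ⊥)
  (hE : ∀ i, ∀ w ∈ W i, E w ∈ W (i + 1))
  (hF : ∀ i, ∀ w ∈ W (i + 1), F w ∈ W i)
  (hF0 : ∀ w ∈ W 0, F w = 0)
  (hC : ∀ i, ∀ w ∈ W i, E (F w) - F (E w) = lam N k i • w)

lemma natcast_ne_zero {t : ℕ} (h0 : 0 < t) (hlt : t < p) : (t : k) ≠ 0 := by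
  rw [Ne, CharP.cast_eq_zero_iff k p]
  intro hdvd
  exact absurd (Nat.le_of_dvd h0 hdvd) (not_le.mpr hlt)

include hNp in
lemma cstr_ne_zero {i m : ℕ} (him : 2 * i + m ≤ N) : cstr N k i m ≠ 0 := by
  rw [cstr, Finset.prod_ne_zero_iff]
  intro s hs
  rw [Finset.mem_range] at hs
  rw [neg_ne_zero]
  apply mul_ne_zero
  · exact natcast_ne_zero (p := p) (Nat.succ_pos s) (by omega)
  · have : lam N k i + (s : ℕ) = -((N - 2*i - s : ℕ) : k) := by
      rw [lam]
      have h1 : (((N - 2*i - s : ℕ)) : k) = (N : k) - ((2*i : ℕ) : k) - (s : k) := by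
        push_cast [Nat.cast_sub (by omega : 2*i ≤ N), Nat.cast_sub (by omega : s ≤ N - 2*i)]
        ring
      rw [h1]; push_cast; ring
    rw [this, neg_ne_zero]
    exact natcast_ne_zero (p := p) (by omega) (by omega)

include hE in
lemma mem_pow : ∀ m (i : ℕ) (w : V), w ∈ W i → (E ^ m) w ∈ W (i + m) := by
  intro m
  induction m with
  | zero => intro i w hw; simpa using hw
  | succ m ih =>
    intro i w hw
    rw [pow_apply_succ E m w, show i + (m+1) = (i+1)+m by omega]
    exact ih (i+1) (E w) (hE i w hw)

include hNp htop hE hF hF0 hC in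
lemma inj : ∀ (i m : ℕ), 2 * i + m ≤ N → ∀ v ∈ W i, (E ^ m) v = 0 → v = 0 := by
  intro i
  induction i with
  | zero =>
    intro m hm v hv hEv
    set M := N with hM
    have hEM : (E ^ N) v = 0 := by
      have : E ^ N = E ^ (N - m) * E ^ m := by rw [← pow_add]; congr 1; omega
      rw [this, Module.End.mul_apply, hEv, map_zero]
    have hlow := lowstring E F W hE hC hv (hF0 v hv) N
    rw [hEM, map_zero] at hlow
    have hc := cstr_ne_zero (k := k) (p := p) hNp (i := 0) (m := N) (by omega)
    exact by
      have := hlow.symm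
      rcases smul_eq_zero.mp this with h | h
      · exact absurd h hc
      · exact h
  | succ i ih =>
    intro m hm v hv hEv
    set M := N - 2 * (i + 1) with hM
    have hEM : (E ^ M) v = 0 := by
      have : E ^ M = E ^ (M - m) * E ^ m := by rw [← pow_add]; congr 1; omega
      rw [this, Module.End.mul_apply, hEv, map_zero]
    -- show F v = 0
    have hFv : F v = 0 := by
      have hcp := comm_pow E F W hE hC (M + 1) (i + 1) v hv
      have hz1 : (E ^ (M + 1 + 1)) v = 0 := by
        have : E ^ (M + 1 + 1) = E ^ 2 * E ^ M := by rw [← pow_add]; congr 1; omega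
        rw [this, Module.End.mul_apply, hEM, map_zero]
      have hz2 : (E ^ (M + 1)) v = 0 := by
        have : E ^ (M + 1) = E ^ 1 * E ^ M := by rw [← pow_add]; congr 1; omega
        rw [this, Module.End.mul_apply, hEM, map_zero]
      rw [hz1, hz2, map_zero, smul_zero, sub_zero] at hcp
      exact ih (M + 2) (by omega) (F v) (hF i v hv) (by rw [← hcp])
    have hlow := lowstring E F W hE hC hv hFv M
    rw [hEM, map_zero] at hlow
    have hc := cstr_ne_zero (k := k) (p := p) hNp (i := i + 1) (m := M) (by omega)
    exact by
      have := hlow.symm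
      rcases smul_eq_zero.mp this with h | h
      · exact absurd h hc
      · exact h


/-- reversed grading -/
noncomputable def Wrev (W : ℕ → Submodule k V) (N : ℕ) : ℕ → Submodule k V :=
  fun j => if j ≤ N then W (N - j) else ⊥

include hNp hfd htop hE hF hF0 hC in
lemma injF : ∀ (i m : ℕ), N ≤ 2 * i - m ∧ m ≤ 2 * i ∧ i ≤ N → ∀ v ∈ W i, (F ^ m) v = 0 → v = 0 := by
  have hfd' : ∀ j, FiniteDimensional k (Wrev W N j) := by
    intro j
    by_cases h : j ≤ N
    · rw [Wrev, if_pos h]; exact hfd _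
    · rw [Wrev, if_neg h]; infer_instance
  have htop' : ∀ j, N < j → Wrev W N j = ⊥ := by
    intro j hj; rw [Wrev, if_neg (by omega)]
  have hE' : ∀ j, ∀ w ∈ Wrev W N j, F w ∈ Wrev W N (j + 1) := by
    intro j w hw
    rw [Wrev] at hw ⊢
    by_cases hj : j ≤ N
    · rw [if_pos hj] at hw
      by_cases hj2 : j + 1 ≤ N
      · rw [if_pos hj2]
        have : N - j = (N - (j+1)) + 1 := by omega
        rw [this] at hw
        exact hF _ w hw
      · rw [if_neg hj2]
        have hj3 : j = N := by omega
        subst hj3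
        simp only [Nat.sub_self] at hw
        simp [hF0 w hw]
    · rw [if_neg hj] at hw
      simp only [Submodule.mem_bot] at hw
      subst hw
      simp
  have hF' : ∀ j, ∀ w ∈ Wrev W N (j + 1), E w ∈ Wrev W N j := by
    intro j w hw
    rw [Wrev] at hw ⊢
    by_cases hj2 : j + 1 ≤ N
    · rw [if_pos hj2] at hw
      rw [if_pos (by omega)]
      have := hE _ w hw
      rwa [show N - (j+1) + 1 = N - j by omega] at this
    · rw [if_neg hj2] at hw
      simp only [Submodule.mem_bot] at hw
      subst hw
      simp
  have hF0' : ∀ w ∈ Wrev W N 0, E w = 0 := by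
    intro w hw
    rw [Wrev, if_pos (Nat.zero_le N), Nat.sub_zero] at hw
    have := hE N w hw
    rw [htop (N+1) (by omega)] at this
    simpa using this
  have hC' : ∀ j, ∀ w ∈ Wrev W N j, F (E w) - E (F w) = lam N k j • w := by
    intro j w hw
    rw [Wrev] at hw
    by_cases hj : j ≤ N
    · rw [if_pos hj] at hw
      have h := hC (N - j) w hw
      have : F (E w) - E (F w) = -(lam N k (N - j)) • w := by
        rw [neg_smul, ← h]; abel
      rw [this]
      congr 1
      rw [lam, lam]
      have h1 : ((2 * (N - j) : ℕ) : k) = 2 * (N : k) - 2 * (j : k) := by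
        rw [Nat.cast_mul, Nat.cast_sub hj]; push_cast; ring
      rw [h1]; push_cast; ring
    · rw [if_neg hj] at hw
      simp only [Submodule.mem_bot] at hw
      subst hw
      simp
  intro i m him v hv hFv
  refine inj (p := p) F E (Wrev W N) hNp htop' hE' hF' hF0' hC' (N - i) m (by omega) v ?_ hFv
  rw [Wrev, if_pos (by omega), show N - (N - i) = i by omega]
  exact hv

include hNp hfd htop hE hF hF0 hC in
lemma surjMid : ∀ i : ℕ, 2 * i ≤ N →
    ∀ w ∈ W (N - i), ∃ u ∈ W i, (E ^ (N - 2 * i)) u = w := by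
  intro i hi w hw
  set M := N - 2 * i with hM
  have hmapmem : ∀ x ∈ W i, (E ^ M) x ∈ W (N - i) := by
    intro x hx
    have := mem_pow E W hE M i x hx
    rwa [show i + M = N - i by omega] at this
  haveI := hfd i
  haveI := hfd (N - i)
  let e : W i →ₗ[k] W (N - i) := (E ^ M : Module.End k V).restrict hmapmem
  have hmapmemF : ∀ x ∈ W (N - i), (F ^ M) x ∈ W i := by
    intro x hx
    have hFpow : ∀ mm jj (x : V), x ∈ W (jj + mm) → (F ^ mm) x ∈ W jj := by
      intro mm
      induction mm with
      | zero => intro jj x hx; simpa using hx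
      | succ mm ihm =>
        intro jj x hx
        rw [pow_apply_succ F mm x]
        exact ihm jj (F x) (hF _ x (by rwa [show jj + mm + 1 = jj + (mm+1) by omega]))
    have := hFpow M i x (by rwa [show i + M = N - i by omega])
    exact this
  let f : W (N - i) →ₗ[k] W i := (F ^ M : Module.End k V).restrict hmapmemF
  have he_inj : Function.Injective e := by
    intro x y hxy
    have h0 : (E ^ M) ((x : V) - y) = 0 := by
      have : ((e x : V)) = ((e y : V)) := by rw [hxy]
      simp only [e, LinearMap.restrict_coe_apply] at this
      rw [map_sub, this, sub_self]
    have := inj (p := p) E F W hNp htop hE hF hF0 hC i M (by omega) ((x : V) - y)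
      (Submodule.sub_mem _ x.2 y.2) h0
    exact Subtype.ext (by rw [← sub_eq_zero]; exact this)
  have hf_inj : Function.Injective f := by
    intro x y hxy
    have h0 : (F ^ M) ((x : V) - y) = 0 := by
      have : ((f x : V)) = ((f y : V)) := by rw [hxy]
      simp only [f, LinearMap.restrict_coe_apply] at this
      rw [map_sub, this, sub_self]
    have := injF E F W (p := p) hNp hfd htop hE hF hF0 hC (N - i) M
      (by omega) ((x : V) - y) (Submodule.sub_mem _ x.2 y.2) h0
    exact Subtype.ext (by rw [← sub_eq_zero]; exact this)
  have hrank : Module.finrank k (W i) = Module.finrank k (W (N - i)) :=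
    le_antisymm (LinearMap.finrank_le_finrank_of_injective he_inj)
      (LinearMap.finrank_le_finrank_of_injective hf_inj)
  have he_surj : Function.Surjective e :=
    (LinearMap.injective_iff_surjective_of_finrank_eq_finrank hrank).mp he_inj
  obtain ⟨u, hu⟩ := he_surj ⟨w, hw⟩
  refine ⟨u, u.2, ?_⟩
  have : ((e u : V)) = w := by rw [hu]
  simpa only [e, LinearMap.restrict_coe_apply] using this

include hNp hfd htop hE hF hF0 hC in
lemma surj : ∀ (i m : ℕ), N ≤ 2 * i + m →
    ∀ w ∈ W (i + m), ∃ u ∈ W i, (E ^ m) u = w := by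
  intro i m hN w hw
  by_cases hb : N < i + m
  · rw [htop _ hb] at hw
    simp only [Submodule.mem_bot] at hw
    subst hw
    exact ⟨0, Submodule.zero_mem _, map_zero _⟩
  · push_neg at hb
    set i' := N - (i + m) with hi'
    have h2i' : 2 * i' ≤ N := by omega
    have hNi' : N - i' = i + m := by omega
    obtain ⟨u', hu', hEu'⟩ := surjMid E F W (p := p) hNp hfd htop hE hF hF0 hC i' h2i' w
      (by rwa [hNi'])
    set M' := N - 2 * i' with hM'
    have hm_le : m ≤ M' := by omega
    refine ⟨(E ^ (M' - m)) u', ?_, ?_⟩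
    · have := mem_pow E W hE (M' - m) i' u' hu'
      rwa [show i' + (M' - m) = i by omega] at this
    · rw [← Module.End.mul_apply, ← pow_add, show m + (M' - m) = M' by omega]
      exact hEu'

end Main

end SL2Abs


namespace MCI

variable {k : Type} [Field k] {n : ℕ} (d : Fin n → ℕ)

/-- reduced exponents -/
def DD (a : Fin n →₀ ℕ) : Prop := ∀ j, a j < d j

/-- total degree of an exponent vector -/
def degA (a : Fin n →₀ ℕ) : ℕ := ∑ j, a j

lemma degA_eq_degree (a : Fin n →₀ ℕ) : Finsupp.degree a = degA a := by
  rw [Finsupp.degree, degA]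
  exact Finset.sum_subset (Finset.subset_univ _)
    (fun x _ hx => Finsupp.notMem_support_iff.mp hx)

lemma degA_addsingle (a : Fin n →₀ ℕ) (j : Fin n) :
    degA (a + Finsupp.single j 1) = degA a + 1 := by
  simp only [degA, Finsupp.add_apply, Finset.sum_add_distrib]
  congr 1
  simp [Finsupp.single_apply]

lemma subsingle_apply (a : Fin n →₀ ℕ) (j l : Fin n) (h : l ≠ j) :
    ((a - Finsupp.single l 1) : Fin n →₀ ℕ) j = a j := by
  rw [Finsupp.tsub_apply, Finsupp.single_apply, if_neg h, Nat.sub_zero]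

lemma degA_subsingle (a : Fin n →₀ ℕ) (j : Fin n) (h : 1 ≤ a j) :
    degA (a - Finsupp.single j 1) + 1 = degA a := by
  rw [degA, degA, ← Finset.sum_erase_add _ _ (Finset.mem_univ j),
    ← Finset.sum_erase_add _ (fun l => a l) (Finset.mem_univ j)]
  have h1 : ∀ l ∈ Finset.univ.erase j, ((a - Finsupp.single j 1) : Fin n →₀ ℕ) l = a l := by
    intro l hl
    exact subsingle_apply a l j (Finset.ne_of_mem_erase hl).symm
  rw [Finset.sum_congr rfl h1]
  have h2 : ((a - Finsupp.single j 1) : Fin n →₀ ℕ) j = a j - 1 := by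
    rw [Finsupp.tsub_apply, Finsupp.single_apply, if_pos rfl]
  rw [h2]
  rw [show (∑ x ∈ Finset.univ.erase j, a x) = (Finset.univ.erase j).sum ⇑a from rfl]
  omega

lemma sub_addsingle (a : Fin n →₀ ℕ) (j : Fin n) (h : 1 ≤ a j) :
    a - Finsupp.single j 1 + Finsupp.single j 1 = a := by
  ext l
  rw [Finsupp.add_apply, Finsupp.tsub_apply, Finsupp.single_apply]
  by_cases hjl : j = l
  · subst hjl; simp; omega
  · simp [hjl]

lemma addsingle_sub (a : Fin n →₀ ℕ) (j : Fin n) :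
    a + Finsupp.single j 1 - Finsupp.single j 1 = a := by
  ext l
  rw [Finsupp.tsub_apply, Finsupp.add_apply]
  omega

lemma comm_sub_add (a : Fin n →₀ ℕ) (j l : Fin n) (hjl : j ≠ l) :
    a - Finsupp.single l 1 + Finsupp.single j 1 = a + Finsupp.single j 1 - Finsupp.single l 1 := by
  ext x
  rw [Finsupp.add_apply, Finsupp.tsub_apply, Finsupp.tsub_apply, Finsupp.add_apply,
    Finsupp.single_apply, Finsupp.single_apply]
  by_cases h1 : j = x <;> by_cases h2 : l = x <;> simp [h1, h2] <;> omega


variable (k)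

/-- raising operator in direction j (with reduction) -/
noncomputable def Ej (j : Fin n) : Module.End k (MvPolynomial (Fin n) k) :=
  (basisMonomials (Fin n) k).constr k fun a =>
    if a j + 1 < d j then monomial (a + Finsupp.single j 1) (1 : k) else 0

/-- lowering operator in direction j -/
noncomputable def Fj (j : Fin n) : Module.End k (MvPolynomial (Fin n) k) :=
  (basisMonomials (Fin n) k).constr k fun a =>
    ((a j * (d j - a j) : ℕ) : k) • monomial (a - Finsupp.single j 1) (1 : k)

noncomputable def Eop : Module.End k (MvPolynomial (Fin n) k) := ∑ j, Ej k d j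
noncomputable def Fop : Module.End k (MvPolynomial (Fin n) k) := ∑ j, Fj k d j

lemma mono_eq_basis (a : Fin n →₀ ℕ) :
    monomial a (1 : k) = basisMonomials (Fin n) k a := by
  rw [coe_basisMonomials]

lemma Ej_mono (j : Fin n) (a : Fin n →₀ ℕ) :
    Ej k d j (monomial a (1 : k)) =
      if a j + 1 < d j then monomial (a + Finsupp.single j 1) (1 : k) else 0 := by
  rw [mono_eq_basis, Ej, Module.Basis.constr_basis]

lemma Fj_mono (j : Fin n) (a : Fin n →₀ ℕ) :
    Fj k d j (monomial a (1 : k)) =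
      ((a j * (d j - a j) : ℕ) : k) • monomial (a - Finsupp.single j 1) (1 : k) := by
  rw [mono_eq_basis, Fj, Module.Basis.constr_basis]

lemma comm_ne (j l : Fin n) (hjl : j ≠ l) (a : Fin n →₀ ℕ) :
    Ej k d j (Fj k d l (monomial a (1 : k))) = Fj k d l (Ej k d j (monomial a (1 : k))) := by
  rw [Fj_mono, map_smul, Ej_mono, Ej_mono]
  rw [subsingle_apply a j l (Ne.symm hjl)]
  by_cases hc : a j + 1 < d j
  · rw [if_pos hc, if_pos hc, Fj_mono]
    rw [show ((a + Finsupp.single j 1) : Fin n →₀ ℕ) l = a l from by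
      rw [Finsupp.add_apply, Finsupp.single_apply, if_neg hjl, add_zero]]
    rw [comm_sub_add a j l hjl]
  · rw [if_neg hc, if_neg hc, smul_zero, map_zero]

lemma comm_eq (j : Fin n) (a : Fin n →₀ ℕ) (ha : a j < d j) :
    Ej k d j (Fj k d j (monomial a (1 : k))) - Fj k d j (Ej k d j (monomial a (1 : k))) =
      (((2 * a j + 1 : ℕ) : k) - ((d j : ℕ) : k)) • monomial a (1 : k) := by
  have key : ∀ u v : ℕ, u < v →
      ((u * (v - u) : ℕ) : k) - (((u + 1) * (v - 1 - u) : ℕ) : k)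
        = ((2 * u + 1 : ℕ) : k) - ((v : ℕ) : k) := by
    intro u v huv
    obtain ⟨w, hw⟩ : ∃ w, v = u + w + 1 := ⟨v - u - 1, by omega⟩
    subst hw
    rw [show u + w + 1 - u = w + 1 by omega, show u + w + 1 - 1 - u = w by omega]
    push_cast
    ring
  rcases Nat.eq_zero_or_pos (a j) with h0 | h0
  · have hfz : Fj k d j (monomial a (1 : k)) = 0 := by
      rw [Fj_mono, h0]; simp
    rw [hfz, map_zero, zero_sub, Ej_mono]
    by_cases hc : a j + 1 < d j
    · rw [if_pos hc, Fj_mono]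
      rw [show ((a + Finsupp.single j 1) : Fin n →₀ ℕ) j = a j + 1 from by
        rw [Finsupp.add_apply, Finsupp.single_apply, if_pos rfl]]
      rw [addsingle_sub, h0, ← neg_smul]
      congr 1
      rw [show ((0 + 1) * (d j - (0 + 1)) : ℕ) = d j - 1 by omega,
          Nat.cast_sub (by omega : 1 ≤ d j)]
      push_cast; ring
    · rw [if_neg hc, map_zero, neg_zero, h0]
      have hd1 : d j = 1 := by omega
      rw [hd1]
      norm_num
  · rw [Fj_mono, map_smul, Ej_mono]
    rw [show ((a - Finsupp.single j 1) : Fin n →₀ ℕ) j + 1 = a j from by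
      rw [Finsupp.tsub_apply, Finsupp.single_apply, if_pos rfl]; omega]
    rw [if_pos ha, sub_addsingle a j h0, Ej_mono]
    have hFE : Fj k d j (if a j + 1 < d j then monomial (a + Finsupp.single j 1) (1:k) else 0)
        = (((a j + 1) * (d j - 1 - a j) : ℕ) : k) • monomial a (1 : k) := by
      by_cases hc : a j + 1 < d j
      · rw [if_pos hc, Fj_mono]
        rw [show ((a + Finsupp.single j 1) : Fin n →₀ ℕ) j = a j + 1 from by
          rw [Finsupp.add_apply, Finsupp.single_apply, if_pos rfl]]
        rw [addsingle_sub]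
        rw [show d j - (a j + 1) = d j - 1 - a j by omega]
      · rw [if_neg hc, map_zero]
        rw [show d j - 1 - a j = 0 by omega, Nat.mul_zero]
        simp
    rw [hFE, ← sub_smul, key (a j) (d j) ha]

variable {k}

/-- the socle degree -/
def NN (d : Fin n → ℕ) : ℕ := ∑ j, (d j - 1)

variable (k)

/-- graded piece spanned by reduced monomials of degree t -/
noncomputable def Wc (t : ℕ) : Submodule k (MvPolynomial (Fin n) k) :=
  Submodule.span k ((fun a => monomial a (1 : k)) '' {a | DD d a ∧ degA a = t})

lemma sum_d (hd : ∀ j, 1 ≤ d j) : ∑ j, d j = NN d + n := by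
  rw [NN]
  have : ∑ j, d j = ∑ j : Fin n, ((d j - 1) + 1) := by
    apply Finset.sum_congr rfl
    intro j _
    have := hd j
    omega
  rw [this, Finset.sum_add_distrib]
  simp

lemma scalar_sum (hd : ∀ j, 1 ≤ d j) (a : Fin n →₀ ℕ) :
    (∑ j, (((2 * a j + 1 : ℕ) : k) - ((d j : ℕ) : k))) = SL2Abs.lam (NN d) k (degA a) := by
  rw [Finset.sum_sub_distrib, SL2Abs.lam]
  rw [← Nat.cast_sum, ← Nat.cast_sum]
  rw [show (∑ j, (2 * a j + 1)) = 2 * degA a + n by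
    rw [Finset.sum_add_distrib, ← Finset.mul_sum, degA]; simp]
  rw [sum_d d hd]
  push_cast
  ring

lemma hC_c (hd : ∀ j, 1 ≤ d j) (t : ℕ) :
    ∀ w ∈ Wc k d t,
      Eop k d (Fop k d w) - Fop k d (Eop k d w) = SL2Abs.lam (NN d) k t • w := by
  intro w hw
  have hker : Wc k d t ≤ LinearMap.ker
      (Eop k d * Fop k d - Fop k d * Eop k d - SL2Abs.lam (NN d) k t • (1 : Module.End k (MvPolynomial (Fin n) k))) := by
    rw [Wc, Submodule.span_le]
    rintro x ⟨a, ⟨haD, haT⟩, rfl⟩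
    simp only [SetLike.mem_coe, LinearMap.mem_ker, LinearMap.sub_apply, Module.End.mul_apply,
      LinearMap.smul_apply, Module.End.one_apply]
    rw [sub_eq_zero, ← haT, ← scalar_sum k d hd a]
    have hEF : Eop k d (Fop k d (monomial a (1:k))) =
        ∑ j, ∑ l, Ej k d j (Fj k d l (monomial a (1:k))) := by
      rw [Eop, Fop, LinearMap.sum_apply]
      apply Finset.sum_congr rfl
      intro j _
      rw [LinearMap.sum_apply, map_sum]
    have hFE : Fop k d (Eop k d (monomial a (1:k))) =
        ∑ j, ∑ l, Fj k d l (Ej k d j (monomial a (1:k))) := by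
      rw [Fop, Eop, LinearMap.sum_apply, Finset.sum_comm]
      apply Finset.sum_congr rfl
      intro j _
      rw [LinearMap.sum_apply, map_sum]
    rw [hEF, hFE, ← Finset.sum_sub_distrib]
    have hdiag : ∀ j : Fin n,
        (∑ l, Ej k d j (Fj k d l (monomial a (1:k)))) - (∑ l, Fj k d l (Ej k d j (monomial a (1:k))))
          = (((2 * a j + 1 : ℕ) : k) - ((d j : ℕ) : k)) • monomial a (1:k) := by
      intro j
      rw [← Finset.sum_sub_distrib]
      rw [Finset.sum_eq_single j]
      · exact comm_eq k d j a (haD j)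
      · intro l _ hlj
        rw [comm_ne k d j l (Ne.symm hlj) a, sub_self]
      · intro h
        exact absurd (Finset.mem_univ j) h
    rw [Finset.sum_congr rfl (fun j _ => hdiag j), ← Finset.sum_smul]
  have := hker hw
  simp only [LinearMap.mem_ker, LinearMap.sub_apply, Module.End.mul_apply, LinearMap.smul_apply,
    Module.End.one_apply] at this
  rw [sub_eq_zero] at this
  exact this

lemma mono_mem_Wc {a : Fin n →₀ ℕ} {t : ℕ} (haD : DD d a) (haT : degA a = t) :
    monomial a (1 : k) ∈ Wc k d t :=
  Submodule.subset_span ⟨a, ⟨haD, haT⟩, rfl⟩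

lemma hE_c (t : ℕ) : ∀ w ∈ Wc k d t, Eop k d w ∈ Wc k d (t + 1) := by
  intro w hw
  have hle : Wc k d t ≤ (Wc k d (t + 1)).comap (Eop k d) := by
    rw [Wc, Submodule.span_le]
    rintro x ⟨a, ⟨haD, haT⟩, rfl⟩
    simp only [SetLike.mem_coe, Submodule.mem_comap]
    rw [Eop, LinearMap.sum_apply]
    apply Submodule.sum_mem
    intro j _
    rw [Ej_mono]
    by_cases hc : a j + 1 < d j
    · rw [if_pos hc]
      apply mono_mem_Wc
      · intro l
        rw [Finsupp.add_apply, Finsupp.single_apply]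
        by_cases hjl : j = l
        · subst hjl; simpa using hc
        · rw [if_neg hjl, add_zero]; exact haD l
      · rw [degA_addsingle, haT]
    · rw [if_neg hc]; exact zero_mem _
  exact hle hw

lemma hF_c (t : ℕ) : ∀ w ∈ Wc k d (t + 1), Fop k d w ∈ Wc k d t := by
  intro w hw
  have hle : Wc k d (t + 1) ≤ (Wc k d t).comap (Fop k d) := by
    rw [Wc, Submodule.span_le]
    rintro x ⟨a, ⟨haD, haT⟩, rfl⟩
    simp only [SetLike.mem_coe, Submodule.mem_comap]
    rw [Fop, LinearMap.sum_apply]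
    apply Submodule.sum_mem
    intro j _
    rw [Fj_mono]
    rcases Nat.eq_zero_or_pos (a j) with h0 | h0
    · rw [h0]
      simp
    · apply Submodule.smul_mem
      apply mono_mem_Wc
      · intro l
        calc ((a - Finsupp.single j 1) : Fin n →₀ ℕ) l ≤ a l := by
              rw [Finsupp.tsub_apply]; omega
          _ < d l := haD l
      · have := degA_subsingle a j h0
        omega
  exact hle hw

lemma hF0_c : ∀ w ∈ Wc k d 0, Fop k d w = 0 := by
  intro w hw
  have hle : Wc k d 0 ≤ LinearMap.ker (Fop k d) := by
    rw [Wc, Submodule.span_le]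
    rintro x ⟨a, ⟨_, haT⟩, rfl⟩
    simp only [SetLike.mem_coe, LinearMap.mem_ker]
    rw [Fop, LinearMap.sum_apply]
    apply Finset.sum_eq_zero
    intro j _
    rw [Fj_mono]
    have : a j = 0 := by
      have h1 : a j ≤ ∑ l, a l :=
        Finset.single_le_sum (f := fun l => a l) (fun l _ => Nat.zero_le _) (Finset.mem_univ j)
      rw [degA] at haT
      omega
    rw [this]
    simp
  exact hle hw

lemma htop_c (t : ℕ) (ht : NN d < t) : Wc k d t = ⊥ := by
  rw [Wc, Submodule.span_eq_bot]
  rintro x ⟨a, ⟨haD, haT⟩, rfl⟩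
  exfalso
  have : degA a ≤ NN d := by
    rw [degA, NN]
    apply Finset.sum_le_sum
    intro j _
    have := haD j
    omega
  omega

lemma hfd_c (t : ℕ) : FiniteDimensional k (Wc k d t) := by
  apply FiniteDimensional.span_of_finite
  apply Set.Finite.image
  apply Set.Finite.subset (Finsupp.finite_of_degree_le t)
  intro a ha
  rw [Set.mem_setOf_eq, degA_eq_degree] at *
  rw [ha.2]

lemma coeff_pideal {w : MvPolynomial (Fin n) k} (hw : w ∈ pideal k d)
    {a : Fin n →₀ ℕ} (haD : DD d a) : coeff a w = 0 := by
  induction hw using Submodule.span_induction generalizing a with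
  | mem x hx =>
    obtain ⟨i, rfl⟩ := hx
    simp only [X_pow_eq_monomial, coeff_monomial]
    split
    · next heq =>
      exfalso
      have := haD i
      rw [← heq, Finsupp.single_apply, if_pos rfl] at this
      omega
    · rfl
  | zero => simp
  | add x y _ _ ihx ihy => rw [coeff_add, ihx haD, ihy haD, add_zero]
  | smul r x _ ihx =>
    rw [smul_eq_mul, coeff_mul]
    apply Finset.sum_eq_zero
    intro q hq
    rw [Finset.HasAntidiagonal.mem_antidiagonal] at hq
    have hq2 : DD d q.2 := by
      intro l
      have : q.2 l ≤ a l := by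
        have : q.1 l + q.2 l = a l := by rw [← Finsupp.add_apply, hq]
        omega
      exact lt_of_le_of_lt this (haD l)
    rw [ihx hq2, mul_zero]

lemma mono_not_DD_mem {b : Fin n →₀ ℕ} (c : k) (hb : ¬ DD d b) :
    monomial b c ∈ pideal k d := by
  rw [DD] at hb
  push_neg at hb
  obtain ⟨i, hi⟩ := hb
  have heq : monomial b c = (X i : MvPolynomial (Fin n) k) ^ d i *
      monomial (b - Finsupp.single i (d i)) c := by
    have hexp : Finsupp.single i (d i) + (b - Finsupp.single i (d i)) = b := by
      ext l
      rw [Finsupp.add_apply, Finsupp.tsub_apply, Finsupp.single_apply]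
      by_cases hil : i = l
      · subst hil; rw [if_pos rfl]; omega
      · rw [if_neg hil]; omega
    rw [X_pow_eq_monomial, monomial_mul, one_mul, hexp]
  rw [heq]
  exact Ideal.mul_mem_right _ _ (Ideal.subset_span ⟨i, rfl⟩)

/-- span of all reduced monomials -/
noncomputable def WD : Submodule k (MvPolynomial (Fin n) k) :=
  Submodule.span k ((fun a => monomial a (1 : k)) '' {a | DD d a})

lemma Wc_le_WD (t : ℕ) : Wc k d t ≤ WD k d := by
  rw [Wc, WD]
  apply Submodule.span_mono
  rintro x ⟨a, ⟨haD, _⟩, rfl⟩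
  exact ⟨a, haD, rfl⟩

lemma WD_coeff {w : MvPolynomial (Fin n) k} (hw : w ∈ WD k d)
    {b : Fin n →₀ ℕ} (hb : ¬ DD d b) : coeff b w = 0 := by
  have hle : WD k d ≤ LinearMap.ker (lcoeff k b) := by
    rw [WD, Submodule.span_le]
    rintro x ⟨a, haD, rfl⟩
    simp only [SetLike.mem_coe, LinearMap.mem_ker, lcoeff_apply]
    rw [coeff_monomial]
    split
    · next heq => exact absurd (heq ▸ haD) hb
    · rfl
  exact hle hw

lemma eq_zero_of_WD_pideal {w : MvPolynomial (Fin n) k} (hw : w ∈ WD k d)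
    (hI : w ∈ pideal k d) : w = 0 := by
  apply MvPolynomial.ext
  intro b
  rw [coeff_zero]
  by_cases hb : DD d b
  · exact coeff_pideal k d hI hb
  · exact WD_coeff k d hw hb

lemma hE_WD : ∀ w ∈ WD k d, Eop k d w ∈ WD k d := by
  intro w hw
  have hle : WD k d ≤ (WD k d).comap (Eop k d) := by
    rw [WD, Submodule.span_le]
    rintro x ⟨a, haD, rfl⟩
    simp only [SetLike.mem_coe, Submodule.mem_comap]
    rw [Eop, LinearMap.sum_apply]
    apply Submodule.sum_mem
    intro j _
    rw [Ej_mono]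
    by_cases hc : a j + 1 < d j
    · rw [if_pos hc]
      apply Submodule.subset_span
      refine ⟨a + Finsupp.single j 1, ?_, rfl⟩
      intro l
      rw [Finsupp.add_apply, Finsupp.single_apply]
      by_cases hjl : j = l
      · subst hjl; simpa using hc
      · rw [if_neg hjl, add_zero]; exact haD l
    · rw [if_neg hc]; exact zero_mem _
  exact hle hw

lemma hE_WD_pow (m : ℕ) : ∀ w ∈ WD k d, (Eop k d ^ m) w ∈ WD k d := by
  induction m with
  | zero => intro w hw; simpa using hw
  | succ m ih =>
    intro w hw
    rw [SL2Abs.pow_apply_succ]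
    exact ih _ (hE_WD k d w hw)

lemma ellE_WD : ∀ w ∈ WD k d, (∑ j, X j : MvPolynomial (Fin n) k) * w - Eop k d w ∈ pideal k d := by
  intro w hw
  have hle : WD k d ≤ Submodule.comap
      ((LinearMap.mulLeft k (∑ j, X j : MvPolynomial (Fin n) k)) - Eop k d)
      (Submodule.restrictScalars k (pideal k d)) := by
    rw [WD, Submodule.span_le]
    rintro x ⟨a, haD, rfl⟩
    simp only [SetLike.mem_coe, Submodule.mem_comap, LinearMap.sub_apply,
      LinearMap.mulLeft_apply, Submodule.restrictScalars_mem]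
    rw [Finset.sum_mul, Eop, LinearMap.sum_apply, ← Finset.sum_sub_distrib]
    apply Ideal.sum_mem
    intro j _
    rw [Ej_mono]
    have hXmul : (X j : MvPolynomial (Fin n) k) * monomial a 1
        = monomial (a + Finsupp.single j 1) (1 : k) := by
      rw [X, monomial_mul, one_mul, add_comm]
    rw [hXmul]
    by_cases hc : a j + 1 < d j
    · rw [if_pos hc, sub_self]
      exact zero_mem _
    · rw [if_neg hc, sub_zero]
      apply mono_not_DD_mem
      intro hDD
      have := hDD j
      rw [Finsupp.add_apply, Finsupp.single_apply, if_pos rfl] at this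
      omega
  have := hle hw
  simpa using this

lemma ellE_pow_WD (m : ℕ) : ∀ w ∈ WD k d,
    (∑ j, X j : MvPolynomial (Fin n) k) ^ m * w - (Eop k d ^ m) w ∈ pideal k d := by
  induction m with
  | zero => intro w hw; simp
  | succ m ih =>
    intro w hw
    have key : (∑ j, X j : MvPolynomial (Fin n) k) ^ (m+1) * w - (Eop k d ^ (m+1)) w
        = (∑ j, X j) * ((∑ j, X j) ^ m * w - (Eop k d ^ m) w)
          + ((∑ j, X j) * ((Eop k d ^ m) w) - Eop k d ((Eop k d ^ m) w)) := by
      rw [SL2Abs.pow_apply_succ']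
      ring
    rw [key]
    exact Ideal.add_mem _ (Ideal.mul_mem_left _ _ (ih w hw))
      (ellE_WD k d _ (hE_WD_pow k d m w hw))

lemma Wc_le_homog (t : ℕ) : Wc k d t ≤ homogeneousSubmodule (Fin n) k t := by
  rw [Wc, Submodule.span_le]
  rintro x ⟨a, ⟨_, haT⟩, rfl⟩
  simp only [SetLike.mem_coe, mem_homogeneousSubmodule]
  apply isHomogeneous_monomial
  rw [degA_eq_degree, haT]

lemma reduce {t : ℕ} {f : MvPolynomial (Fin n) k}
    (hf : f ∈ homogeneousSubmodule (Fin n) k t) :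
    ∃ w ∈ Wc k d t, f - w ∈ pideal k d := by
  classical
  refine ⟨∑ a ∈ f.support.filter (fun a => ∀ j, a j < d j), monomial a (coeff a f), ?_, ?_⟩
  · apply Submodule.sum_mem
    intro a ha
    rw [Finset.mem_filter] at ha
    have hmono : monomial a (coeff a f) = (coeff a f) • monomial a (1 : k) := by
      rw [smul_monomial, smul_eq_mul, mul_one]
    rw [hmono]
    apply Submodule.smul_mem
    apply mono_mem_Wc
    · exact ha.2
    · have hh := (mem_homogeneousSubmodule t f).mp hf
      have hc : coeff a f ≠ 0 := mem_support_iff.mp ha.1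
      have := hh hc
      rw [← degA_eq_degree, Finsupp.degree_eq_weight_one]
      exact this
  · have hsub : f - (∑ a ∈ f.support.filter (fun a => ∀ j, a j < d j), monomial a (coeff a f))
        = ∑ a ∈ f.support.filter (fun a => ¬ ∀ j, a j < d j), monomial a (coeff a f) := by
      rw [sub_eq_iff_eq_add']
      exact (as_sum f).trans (Finset.sum_filter_add_sum_filter_not _ _ _).symm
    rw [hsub]
    apply Ideal.sum_mem
    intro a ha
    rw [Finset.mem_filter] at ha
    exact mono_not_DD_mem k d _ ha.2

end MCI

/-- If `Σ (d_i - 1) < p`, then `A` has the strong Lefschetz property with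
`x_1 + ⋯ + x_n` as a strong Lefschetz element. -/
theorem stmt9 {k : Type} [Field k] {p n : ℕ} (hp : p.Prime) [CharP k p]
    (hn : 1 ≤ n) (d : Fin n → ℕ) (hd : ∀ i, 2 ≤ d i)
    (ht : ∑ i, (d i - 1) < p) :
    ∀ m, 1 ≤ m → ∀ i,
      maxRankOn ((Ideal.Quotient.mk (pideal k d) (∑ j, X j)) ^ m)
        (comp k d i) (comp k d (i + m)) := by
  intro m _ i
  haveI : Fact p.Prime := ⟨hp⟩
  have hd1 : ∀ j, 1 ≤ d j := fun j => le_trans (by norm_num) (hd j)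
  have hNp : MCI.NN d < p := ht
  have hmk : ∀ x : MvPolynomial (Fin n) k,
      (Ideal.Quotient.mkₐ k (pideal k d)).toLinearMap x = Ideal.Quotient.mk (pideal k d) x :=
    fun x => rfl
  have hmulmk : ∀ (x y : MvPolynomial (Fin n) k),
      (Ideal.Quotient.mk (pideal k d) x) ^ m * Ideal.Quotient.mk (pideal k d) y
        = Ideal.Quotient.mk (pideal k d) (x ^ m * y) := by
    intro x y
    rw [map_mul, map_pow]
  have hEell : ∀ w ∈ MCI.WD k d,
      Ideal.Quotient.mk (pideal k d) ((∑ j, X j : MvPolynomial (Fin n) k) ^ m * w)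
        = Ideal.Quotient.mk (pideal k d) ((MCI.Eop k d ^ m) w) :=
    fun w hw => Ideal.Quotient.eq.mpr (MCI.ellE_pow_WD k d m w hw)
  by_cases hcase : 2 * i + m ≤ MCI.NN d
  · left
    rintro f hf hsf
    rw [comp, qcomp] at hf
    obtain ⟨G, hG, rfl⟩ := Submodule.mem_map.mp hf
    obtain ⟨w, hwW, hGw⟩ := MCI.reduce k d hG
    rw [hmk] at hsf ⊢
    have hGmk : Ideal.Quotient.mk (pideal k d) G = Ideal.Quotient.mk (pideal k d) w :=
      Ideal.Quotient.eq.mpr hGw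
    rw [hmulmk, map_mul, hGmk, ← map_mul, ← hmulmk, hmulmk] at hsf
    rw [hEell w (MCI.Wc_le_WD k d i hwW)] at hsf
    have hEwI : (MCI.Eop k d ^ m) w ∈ pideal k d := Ideal.Quotient.eq_zero_iff_mem.mp hsf
    have hEw0 : (MCI.Eop k d ^ m) w = 0 :=
      MCI.eq_zero_of_WD_pideal k d (MCI.hE_WD_pow k d m w (MCI.Wc_le_WD k d i hwW)) hEwI
    have hw0 : w = 0 :=
      SL2Abs.inj (p := p) (MCI.Eop k d) (MCI.Fop k d) (MCI.Wc k d) hNp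
        (MCI.htop_c k d) (MCI.hE_c k d) (MCI.hF_c k d) (MCI.hF0_c k d)
        (MCI.hC_c k d hd1) i m hcase w hwW hEw0
    rw [hw0, sub_zero] at hGw
    exact Ideal.Quotient.eq_zero_iff_mem.mpr hGw
  · right
    push_neg at hcase
    rintro g hg
    rw [comp, qcomp] at hg
    obtain ⟨G, hG, rfl⟩ := Submodule.mem_map.mp hg
    obtain ⟨u, huW, hGu⟩ := MCI.reduce k d hG
    obtain ⟨w, hwW, hEw⟩ :=
      SL2Abs.surj (p := p) (MCI.Eop k d) (MCI.Fop k d) (MCI.Wc k d) hNp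
        (MCI.hfd_c k d) (MCI.htop_c k d) (MCI.hE_c k d) (MCI.hF_c k d) (MCI.hF0_c k d)
        (MCI.hC_c k d hd1) i m (le_of_lt hcase) u huW
    refine ⟨(Ideal.Quotient.mkₐ k (pideal k d)).toLinearMap w, ?_, ?_⟩
    · rw [comp, qcomp]
      exact Submodule.mem_map.mpr ⟨w, MCI.Wc_le_homog k d i hwW, rfl⟩
    · rw [hmk, hmk, hmulmk]
      rw [hEell w (MCI.Wc_le_WD k d i hwW), hEw]
      exact (Ideal.Quotient.eq.mpr hGu).symm
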